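/- Let X be a set of feasible evaluations. Then X is a possibility domain if and only if X admits a binary non-dictatorial aggregator, or X admits a majority aggregator, or X admits a minority aggregator. -/

import Mathlib

/-- A set of feasible evaluations: every projection has at least two elements. -/
def Feasible {m : ℕ} {A : Fin m → Type*} (X : Set (∀ j, A j)) : Prop :=
  ∀ j, ∃ z ∈ X, ∃ z' ∈ X, z j ≠ z' j

/-- An `n`-ary aggregator for a set `X` of feasible evaluations. -/
def IsAggregator {m : ℕ} {A : Fin m → Type*} {n : ℕ} (X : Set (∀ j, A j))
    (f : ∀ j, (Fin n → A j) → A j) : Prop :=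
  (∀ j (x : Fin n → A j), ∃ i, f j x = x i) ∧
  (∀ xs : Fin n → (∀ j, A j), (∀ i, xs i ∈ X) → (fun j => f j (fun i => xs i j)) ∈ X)

/-- An `n`-ary tuple of operations is dictatorial on `X` if, on tuples from `X`,
each component acts as the projection on a common coordinate `d`. -/
def IsDictatorial {m : ℕ} {A : Fin m → Type*} {n : ℕ} (X : Set (∀ j, A j))
    (f : ∀ j, (Fin n → A j) → A j) : Prop :=
  ∃ d : Fin n, ∀ xs : Fin n → (∀ j, A j), (∀ i, xs i ∈ X) →
    ∀ j, f j (fun i => xs i j) = xs d j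

/-- `X` is a possibility domain: it admits a non-dictatorial aggregator of some
arity `n ≥ 2`. -/
def IsPossibilityDomain {m : ℕ} {A : Fin m → Type*} (X : Set (∀ j, A j)) : Prop :=
  ∃ n : ℕ, 2 ≤ n ∧ ∃ f : ∀ j, (Fin n → A j) → A j,
    IsAggregator X f ∧ ¬ IsDictatorial X f

/-- A ternary majority operation. -/
def IsMajorityOp {B : Type*} (g : (Fin 3 → B) → B) : Prop :=
  ∀ x y : B, g ![x, x, y] = x ∧ g ![x, y, x] = x ∧ g ![y, x, x] = x

/-- A ternary minority operation. -/
def IsMinorityOp {B : Type*} (g : (Fin 3 → B) → B) : Prop :=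
  ∀ x y : B, g ![x, x, y] = y ∧ g ![x, y, x] = y ∧ g ![y, x, x] = y

section Helpers

variable {m n : ℕ} {A : Fin m → Type*} {X : Set (∀ j, A j)}
  {f : ∀ j, (Fin n → A j) → A j}

/-- membership in the family of "decisive" index sets for an aggregator. -/
def memU (X : Set (∀ j, A j)) (f : ∀ j, (Fin n → A j) → A j) (S : Finset (Fin n)) : Prop :=
  ∀ u ∈ X, ∀ v ∈ X, ∀ j, f j (fun i => if i ∈ S then u j else v j) = u j

lemma mem2 {u v : ∀ j, A j} (hu : u ∈ X) (hv : v ∈ X) :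
    ∀ i : Fin 2, (![u, v] : Fin 2 → ∀ j, A j) i ∈ X := by
  intro i; fin_cases i <;> assumption

lemma mem3 {u v w : ∀ j, A j} (hu : u ∈ X) (hv : v ∈ X) (hw : w ∈ X) :
    ∀ i : Fin 3, (![u, v, w] : Fin 3 → ∀ j, A j) i ∈ X := by
  intro i; fin_cases i <;> assumption

lemma memU_univ (hf : IsAggregator X f) : memU X f Finset.univ := by
  intro u hu v hv j
  obtain ⟨i, hi⟩ := hf.1 j (fun i => if i ∈ Finset.univ then u j else v j)
  simpa using hi

lemma not_memU_empty (hm : 1 ≤ m) (hX : Feasible X) (hf : IsAggregator X f) :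
    ¬ memU X f ∅ := by
  intro h
  obtain ⟨z, hz, z', hz', hne⟩ := hX ⟨0, hm⟩
  have h1 := h z hz z' hz' ⟨0, hm⟩
  obtain ⟨i, hi⟩ := hf.1 ⟨0, hm⟩ (fun i => if i ∈ (∅ : Finset (Fin n)) then z ⟨0, hm⟩ else z' ⟨0, hm⟩)
  simp only [Finset.notMem_empty, if_false] at h1 hi
  exact hne (h1.symm.trans hi)

lemma memU_dich (hf : IsAggregator X f)
    (hH : ∀ g : ∀ j, (Fin 2 → A j) → A j, IsAggregator X g → IsDictatorial X g)
    (S : Finset (Fin n)) : memU X f S ∨ memU X f Sᶜ := by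
  classical
  set g : ∀ j, (Fin 2 → A j) → A j :=
    fun j t => f j (fun i => if i ∈ S then t 0 else t 1) with hg
  have hgagg : IsAggregator X g := by
    constructor
    · intro j t
      obtain ⟨i, hi⟩ := hf.1 j (fun i => if i ∈ S then t 0 else t 1)
      by_cases h : i ∈ S
      · exact ⟨0, by simpa [h] using hi⟩
      · exact ⟨1, by simpa [h] using hi⟩
    · intro xs hxs
      have := hf.2 (fun i => if i ∈ S then xs 0 else xs 1)
        (fun i => by by_cases h : i ∈ S <;> simp [h, hxs 0, hxs 1])
      convert this using 1
      funext j
      simp only [hg]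
      congr 1
      funext i
      by_cases h : i ∈ S <;> simp [h]
  obtain ⟨d2, hd2⟩ := hH g hgagg
  fin_cases d2
  · left
    intro u hu v hv j
    have h := hd2 ![u, v] (mem2 hu hv) j
    simpa [hg] using h
  · right
    intro u hu v hv j
    have h := hd2 ![v, u] (mem2 hv hu) j
    simp only [hg] at h
    have hcol : (fun i => if i ∈ Sᶜ then u j else v j)
        = (fun i => if i ∈ S then (fun i2 => (![v, u] : Fin 2 → ∀ j, A j) i2 j) 0
            else (fun i2 => (![v, u] : Fin 2 → ∀ j, A j) i2 j) 1) := by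
      funext i
      by_cases hi : i ∈ S <;> simp [hi]
    rw [hcol]
    simpa using h

lemma memU_noboth (hm : 1 ≤ m) (hX : Feasible X) {S : Finset (Fin n)}
    (h1 : memU X f S) (h2 : memU X f Sᶜ) : False := by
  classical
  obtain ⟨z, hz, z', hz', hne⟩ := hX ⟨0, hm⟩
  have e1 := h1 z hz z' hz' ⟨0, hm⟩
  have e2 := h2 z' hz' z hz ⟨0, hm⟩
  have hcol : (fun i => if i ∈ Sᶜ then z' ⟨0, hm⟩ else z ⟨0, hm⟩)
      = (fun i => if i ∈ S then z ⟨0, hm⟩ else z' ⟨0, hm⟩) := by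
    funext i; by_cases hi : i ∈ S <;> simp [hi]
  rw [hcol] at e2
  exact hne (e1.symm.trans e2)

end Helpers

section Helpers2

variable {m n : ℕ} {A : Fin m → Type*} {X : Set (∀ j, A j)}
  {f : ∀ j, (Fin n → A j) → A j}

/-- ternary minor of `f` determined by two disjoint index sets. -/
def tern (f : ∀ j, (Fin n → A j) → A j) (S1 S2 : Finset (Fin n)) :
    ∀ j, (Fin 3 → A j) → A j :=
  fun j t => f j (fun i => if i ∈ S1 then t 0 else if i ∈ S2 then t 1 else t 2)

lemma tern_agg (hf : IsAggregator X f) (S1 S2 : Finset (Fin n)) :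
    IsAggregator X (tern f S1 S2) := by
  classical
  constructor
  · intro j t
    obtain ⟨i, hi⟩ := hf.1 j (fun i => if i ∈ S1 then t 0 else if i ∈ S2 then t 1 else t 2)
    by_cases h1 : i ∈ S1
    · exact ⟨0, by simpa [h1, tern] using hi⟩
    · by_cases h2 : i ∈ S2
      · exact ⟨1, by simpa [h1, h2, tern] using hi⟩
      · exact ⟨2, by simpa [h1, h2, tern] using hi⟩
  · intro xs hxs
    have := hf.2 (fun i => if i ∈ S1 then xs 0 else if i ∈ S2 then xs 1 else xs 2)
      (fun i => by by_cases h1 : i ∈ S1 <;> by_cases h2 : i ∈ S2 <;>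
        simp [h1, h2, hxs 0, hxs 1, hxs 2])
    convert this using 1
    funext j
    show f j _ = f j _
    congr 1
    funext i
    by_cases h1 : i ∈ S1 <;> by_cases h2 : i ∈ S2 <;> simp [h1, h2]

lemma tern_col (S1 S2 : Finset (Fin n)) (j : Fin m) (a b c : A j) :
    tern f S1 S2 j ![a, b, c]
      = f j (fun i => if i ∈ S1 then a else if i ∈ S2 then b else c) := rfl

/-- `G(u,u,v) = u` when `S1 ∪ S2` is decisive. -/
lemma tern_e1 {S1 S2 : Finset (Fin n)} (h : memU X f (S1 ∪ S2)) :
    ∀ u ∈ X, ∀ v ∈ X, ∀ j, tern f S1 S2 j ![u j, u j, v j] = u j := by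
  intro u hu v hv j
  rw [tern_col]
  have := h u hu v hv j
  convert this using 2
  funext i
  by_cases h1 : i ∈ S1 <;> by_cases h2 : i ∈ S2 <;> simp [h1, h2, Finset.mem_union]

/-- `G(u,u,v) = v` when `(S1 ∪ S2)ᶜ` is decisive. -/
lemma tern_e1' {S1 S2 : Finset (Fin n)} (h : memU X f (S1 ∪ S2)ᶜ) :
    ∀ u ∈ X, ∀ v ∈ X, ∀ j, tern f S1 S2 j ![u j, u j, v j] = v j := by
  intro u hu v hv j
  rw [tern_col]
  have := h v hv u hu j
  convert this using 2
  funext i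
  by_cases h1 : i ∈ S1 <;> by_cases h2 : i ∈ S2 <;>
    simp [h1, h2, Finset.mem_compl, Finset.mem_union]

/-- `G(u,v,u) = u` when `S2ᶜ` is decisive. -/
lemma tern_e2 {S1 S2 : Finset (Fin n)} (hd : Disjoint S1 S2) (h : memU X f S2ᶜ) :
    ∀ u ∈ X, ∀ v ∈ X, ∀ j, tern f S1 S2 j ![u j, v j, u j] = u j := by
  intro u hu v hv j
  rw [tern_col]
  have := h u hu v hv j
  convert this using 2
  funext i
  by_cases h2 : i ∈ S2
  · have h1 : i ∉ S1 := fun h1 => (Finset.disjoint_left.mp hd h1) h2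
    simp [h1, h2]
  · by_cases h1 : i ∈ S1 <;> simp [h1, h2]

/-- `G(u,v,u) = v` when `S2` is decisive. -/
lemma tern_e2' {S1 S2 : Finset (Fin n)} (hd : Disjoint S1 S2) (h : memU X f S2) :
    ∀ u ∈ X, ∀ v ∈ X, ∀ j, tern f S1 S2 j ![u j, v j, u j] = v j := by
  intro u hu v hv j
  rw [tern_col]
  have := h v hv u hu j
  convert this using 2
  funext i
  by_cases h2 : i ∈ S2
  · have h1 : i ∉ S1 := fun h1 => (Finset.disjoint_left.mp hd h1) h2
    simp [h1, h2]
  · by_cases h1 : i ∈ S1 <;> simp [h1, h2]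

/-- `G(v,u,u) = u` when `S1ᶜ` is decisive. -/
lemma tern_e3 {S1 S2 : Finset (Fin n)} (h : memU X f S1ᶜ) :
    ∀ u ∈ X, ∀ v ∈ X, ∀ j, tern f S1 S2 j ![v j, u j, u j] = u j := by
  intro u hu v hv j
  rw [tern_col]
  have := h u hu v hv j
  convert this using 2
  funext i
  by_cases h1 : i ∈ S1 <;> by_cases h2 : i ∈ S2 <;> simp [h1, h2]

/-- `G(v,u,u) = v` when `S1` is decisive. -/
lemma tern_e3' {S1 S2 : Finset (Fin n)} (h : memU X f S1) :
    ∀ u ∈ X, ∀ v ∈ X, ∀ j, tern f S1 S2 j ![v j, u j, u j] = v j := by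
  intro u hu v hv j
  rw [tern_col]
  have := h v hv u hu j
  convert this using 2
  funext i
  by_cases h1 : i ∈ S1 <;> by_cases h2 : i ∈ S2 <;> simp [h1, h2]

end Helpers2
section Helpers3

variable {m : ℕ} {A : Fin m → Type*} {X : Set (∀ j, A j)}

lemma colfin3 (xs : Fin 3 → ∀ j, A j) (j : Fin m) :
    (fun i : Fin 3 => xs i j) = ![xs 0 j, xs 1 j, xs 2 j] := by
  funext i; fin_cases i <;> rfl

lemma exists_maj_of_pattern (G : ∀ j, (Fin 3 → A j) → A j) (hG : IsAggregator X G)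
    (e1 : ∀ u ∈ X, ∀ v ∈ X, ∀ j, G j ![u j, u j, v j] = u j)
    (e2 : ∀ u ∈ X, ∀ v ∈ X, ∀ j, G j ![u j, v j, u j] = u j)
    (e3 : ∀ u ∈ X, ∀ v ∈ X, ∀ j, G j ![v j, u j, u j] = u j) :
    ∃ F : ∀ j, (Fin 3 → A j) → A j, IsAggregator X F ∧ ∀ j, IsMajorityOp (F j) := by
  classical
  refine ⟨fun j t => if t 0 = t 1 ∨ t 0 = t 2 then t 0 else if t 1 = t 2 then t 1 else G j t,
    ⟨?_, ?_⟩, ?_⟩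
  · intro j t
    by_cases h1 : t 0 = t 1 ∨ t 0 = t 2
    · exact ⟨0, by simp [h1]⟩
    · by_cases h2 : t 1 = t 2
      · exact ⟨1, by simp [h1, h2]⟩
      · obtain ⟨i, hi⟩ := hG.1 j t
        exact ⟨i, by simp [h1, h2, hi]⟩
  · intro xs hxs
    convert hG.2 xs hxs using 1
    funext j
    show (if xs 0 j = xs 1 j ∨ xs 0 j = xs 2 j then xs 0 j
      else if xs 1 j = xs 2 j then xs 1 j else G j (fun i => xs i j))
      = G j (fun i => xs i j)
    by_cases h1 : xs 0 j = xs 1 j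
    · have hcol : (fun i : Fin 3 => xs i j) = ![xs 0 j, xs 0 j, xs 2 j] := by
        rw [colfin3, show xs 1 j = xs 0 j from h1.symm]
      rw [if_pos (Or.inl h1), hcol]
      exact (e1 (xs 0) (hxs 0) (xs 2) (hxs 2) j).symm
    · by_cases h2 : xs 0 j = xs 2 j
      · have hcol : (fun i : Fin 3 => xs i j) = ![xs 0 j, xs 1 j, xs 0 j] := by
          rw [colfin3, show xs 2 j = xs 0 j from h2.symm]
        rw [if_pos (Or.inr h2), hcol]
        exact (e2 (xs 0) (hxs 0) (xs 1) (hxs 1) j).symm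
      · by_cases h3 : xs 1 j = xs 2 j
        · have hcol : (fun i : Fin 3 => xs i j) = ![xs 0 j, xs 1 j, xs 1 j] := by
            rw [colfin3, show xs 2 j = xs 1 j from h3.symm]
          rw [if_neg (by tauto), if_pos h3, hcol]
          exact (e3 (xs 1) (hxs 1) (xs 0) (hxs 0) j).symm
        · rw [if_neg (by tauto), if_neg h3]
  · intro j x y
    refine ⟨by simp, by simp, ?_⟩
    by_cases h : y = x
    · simp [h]
    · simp [h]

lemma exists_min_of_pattern (G : ∀ j, (Fin 3 → A j) → A j) (hG : IsAggregator X G)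
    (e1 : ∀ u ∈ X, ∀ v ∈ X, ∀ j, G j ![u j, u j, v j] = v j)
    (e2 : ∀ u ∈ X, ∀ v ∈ X, ∀ j, G j ![u j, v j, u j] = v j)
    (e3 : ∀ u ∈ X, ∀ v ∈ X, ∀ j, G j ![v j, u j, u j] = v j) :
    ∃ F : ∀ j, (Fin 3 → A j) → A j, IsAggregator X F ∧ ∀ j, IsMinorityOp (F j) := by
  classical
  refine ⟨fun j t => if t 0 = t 1 then t 2 else if t 0 = t 2 then t 1
      else if t 1 = t 2 then t 0 else G j t, ⟨?_, ?_⟩, ?_⟩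
  · intro j t
    by_cases h1 : t 0 = t 1
    · exact ⟨2, by simp [h1]⟩
    · by_cases h2 : t 0 = t 2
      · exact ⟨1, by simp [h1, h2]⟩
      · by_cases h3 : t 1 = t 2
        · exact ⟨0, by simp [h1, h2, h3]⟩
        · obtain ⟨i, hi⟩ := hG.1 j t
          exact ⟨i, by simp [h1, h2, h3, hi]⟩
  · intro xs hxs
    convert hG.2 xs hxs using 1
    funext j
    show (if xs 0 j = xs 1 j then xs 2 j else if xs 0 j = xs 2 j then xs 1 j
      else if xs 1 j = xs 2 j then xs 0 j else G j (fun i => xs i j))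
      = G j (fun i => xs i j)
    by_cases h1 : xs 0 j = xs 1 j
    · have hcol : (fun i : Fin 3 => xs i j) = ![xs 0 j, xs 0 j, xs 2 j] := by
        rw [colfin3, show xs 1 j = xs 0 j from h1.symm]
      rw [if_pos h1, hcol]
      exact (e1 (xs 0) (hxs 0) (xs 2) (hxs 2) j).symm
    · by_cases h2 : xs 0 j = xs 2 j
      · have hcol : (fun i : Fin 3 => xs i j) = ![xs 0 j, xs 1 j, xs 0 j] := by
          rw [colfin3, show xs 2 j = xs 0 j from h2.symm]
        rw [if_neg h1, if_pos h2, hcol]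
        exact (e2 (xs 0) (hxs 0) (xs 1) (hxs 1) j).symm
      · by_cases h3 : xs 1 j = xs 2 j
        · have hcol : (fun i : Fin 3 => xs i j) = ![xs 0 j, xs 1 j, xs 1 j] := by
            rw [colfin3, show xs 2 j = xs 1 j from h3.symm]
          rw [if_neg h1, if_neg h2, if_pos h3, hcol]
          exact (e3 (xs 1) (hxs 1) (xs 0) (hxs 0) j).symm
        · rw [if_neg h1, if_neg h2, if_neg h3]
  · intro j x y
    refine ⟨by simp, ?_, ?_⟩
    · by_cases h : x = y
      · simp [h]
      · simp [h]
    · by_cases h : y = x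
      · simp [h]
      · simp [h]

end Helpers3
section Helpers4

variable {m n : ℕ} {A : Fin m → Type*} {X : Set (∀ j, A j)}
  {f : ∀ j, (Fin n → A j) → A j}

lemma exists_maj_of_hpattern (G : ∀ j, (Fin 3 → A j) → A j) (hG : IsAggregator X G)
    (p1 : ∀ u ∈ X, ∀ v ∈ X, ∀ j, G j ![u j, u j, v j] = u j)
    (p2 : ∀ u ∈ X, ∀ v ∈ X, ∀ j, G j ![u j, v j, u j] = v j)
    (p3 : ∀ u ∈ X, ∀ v ∈ X, ∀ j, G j ![v j, u j, u j] = v j) :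
    ∃ F : ∀ j, (Fin 3 → A j) → A j, IsAggregator X F ∧ ∀ j, IsMajorityOp (F j) := by
  classical
  set Tm : ∀ j, (Fin 3 → A j) → A j := fun j t => G j ![t 0, t 1, G j t] with hTm
  have hTagg : IsAggregator X Tm := by
    constructor
    · intro j t
      obtain ⟨i, hi⟩ := hG.1 j ![t 0, t 1, G j t]
      fin_cases i
      · exact ⟨0, hi⟩
      · exact ⟨1, hi⟩
      · obtain ⟨i', hi'⟩ := hG.1 j t
        refine ⟨i', ?_⟩
        show G j ![t 0, t 1, G j t] = t i'
        have h2 : (![t 0, t 1, G j t] : Fin 3 → A j) ⟨2, by omega⟩ = G j t := rfl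
        rw [h2] at hi
        rw [hi]
        exact hi'
    · intro xs hxs
      have hw : (fun j => G j (fun i => xs i j)) ∈ X := hG.2 xs hxs
      set ys : Fin 3 → ∀ j, A j := ![xs 0, xs 1, fun j => G j (fun i => xs i j)] with hys
      have := hG.2 ys (mem3 (hxs 0) (hxs 1) hw)
      convert this using 1
      funext j
      show G j ![xs 0 j, xs 1 j, G j (fun i => xs i j)] = G j (fun i => ys i j)
      rw [colfin3 ys j]
      rfl
  have e1 : ∀ u ∈ X, ∀ v ∈ X, ∀ j, Tm j ![u j, u j, v j] = u j := by
    intro u hu v hv j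
    show G j ![u j, u j, G j ![u j, u j, v j]] = u j
    rw [p1 u hu v hv j]
    exact p1 u hu u hu j
  have e2 : ∀ u ∈ X, ∀ v ∈ X, ∀ j, Tm j ![u j, v j, u j] = u j := by
    intro u hu v hv j
    show G j ![u j, v j, G j ![u j, v j, u j]] = u j
    rw [p2 u hu v hv j]
    exact p3 v hv u hu j
  have e3 : ∀ u ∈ X, ∀ v ∈ X, ∀ j, Tm j ![v j, u j, u j] = u j := by
    intro u hu v hv j
    show G j ![v j, u j, G j ![v j, u j, u j]] = u j
    rw [p3 u hu v hv j]
    exact p2 v hv u hu j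
  exact exists_maj_of_pattern Tm hTagg e1 e2 e3

lemma principal (hm : 1 ≤ m) (hX : Feasible X) (hf : IsAggregator X f)
    (hH : ∀ g : ∀ j, (Fin 2 → A j) → A j, IsAggregator X g → IsDictatorial X g)
    (hC2 : ∀ S T : Finset (Fin n), Disjoint S T → memU X f S → memU X f T → False)
    (hC1 : ∀ S T : Finset (Fin n), Disjoint S T → ¬ memU X f S → ¬ memU X f T →
      memU X f ((S ∪ T)ᶜ)) :
    ∃ d : Fin n, ∀ S : Finset (Fin n), memU X f S ↔ d ∈ S := by
  classical
  have hup : ∀ S V : Finset (Fin n), memU X f S → S ⊆ V → memU X f V := by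
    intro S V hS hSV
    rcases memU_dich hf hH V with h | h
    · exact h
    · exact absurd h (fun h' => hC2 S Vᶜ (Finset.disjoint_left.mpr
        (fun a ha hc => (Finset.mem_compl.mp hc) (hSV ha))) hS h')
  have hinter : ∀ S T : Finset (Fin n), memU X f S → memU X f T → memU X f (S ∩ T) := by
    intro S T hS hT
    by_contra hST
    have hSc : ¬ memU X f Sᶜ := fun h => memU_noboth hm hX hS h
    have hdisj1 : Disjoint (S ∩ T) Sᶜ := Finset.disjoint_left.mpr
      (fun a ha hc => (Finset.mem_compl.mp hc) (Finset.mem_inter.mp ha).1)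
    have h3 := hC1 (S ∩ T) Sᶜ hdisj1 hST hSc
    have hset : ((S ∩ T) ∪ Sᶜ)ᶜ = S \ T := by
      ext a
      simp only [Finset.mem_compl, Finset.mem_union, Finset.mem_inter, Finset.mem_sdiff]
      tauto
    rw [hset] at h3
    exact hC2 (S \ T) T Finset.sdiff_disjoint h3 hT
  set P : ℕ → Prop := fun c => ∃ S : Finset (Fin n), memU X f S ∧ S.card = c with hP
  have hPex : ∃ c, P c := ⟨_, Finset.univ, memU_univ hf, rfl⟩
  obtain ⟨S0, hS0, hScard⟩ := Nat.find_spec hPex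
  have hmin : ∀ S : Finset (Fin n), memU X f S → ¬ S.card < Nat.find hPex :=
    fun S h hlt => Nat.find_min hPex hlt ⟨S, h, rfl⟩
  have hS0ne : S0.Nonempty := by
    rcases Finset.eq_empty_or_nonempty S0 with h | h
    · exact absurd (h ▸ hS0) (not_memU_empty hm hX hf)
    · exact h
  obtain ⟨d, hd⟩ := hS0ne
  have hsingle : memU X f {d} := by
    by_cases hS0d : S0 = {d}
    · exact hS0d ▸ hS0
    · exfalso
      have hb : (S0 \ {d}).Nonempty := by
        rw [Finset.sdiff_nonempty]
        intro hsub
        exact hS0d (Finset.Subset.antisymm hsub (Finset.singleton_subset_iff.mpr hd))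
      obtain ⟨b, hb'⟩ := hb
      have hbS0 := (Finset.mem_sdiff.mp hb').1
      have hbd : b ≠ d := by simpa using (Finset.mem_sdiff.mp hb').2
      have hcard2 : 2 ≤ S0.card := Finset.one_lt_card.mpr ⟨d, hd, b, hbS0, fun h => hbd h.symm⟩
      have hdnot : ¬ memU X f {d} := by
        intro h
        exact hmin {d} h (by rw [Finset.card_singleton, ← hScard]; omega)
      have hdc : memU X f ({d}ᶜ) := (memU_dich hf hH {d}).resolve_left hdnot
      have h4 : memU X f (S0 ∩ {d}ᶜ) := hinter _ _ hS0 hdc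
      have hset : S0 ∩ {d}ᶜ = S0.erase d := by
        ext a
        simp [Finset.mem_erase, and_comm]
      rw [hset] at h4
      exact hmin _ h4 (by rw [Finset.card_erase_of_mem hd, ← hScard]; omega)
  refine ⟨d, fun S => ⟨?_, ?_⟩⟩
  · intro hS
    by_contra hdS
    exact hC2 {d} S (Finset.disjoint_left.mpr (fun a ha h2 => hdS (by
      rwa [Finset.mem_singleton.mp ha] at h2))) hsingle hS
  · intro hdS
    exact hup {d} S hsingle (Finset.singleton_subset_iff.mpr hdS)

end Helpers4
section Helpers5

variable {m N : ℕ} {A : Fin m → Type*} {X : Set (∀ j, A j)}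

lemma endgame (hm : 1 ≤ m) (hX : Feasible X) (hN : 2 ≤ N)
    (f : ∀ j, (Fin (N + 1) → A j) → A j) (hf : IsAggregator X f)
    (hH : ∀ g : ∀ j, (Fin 2 → A j) → A j, IsAggregator X g → IsDictatorial X g)
    (hIH : ∀ M : ∀ j, (Fin N → A j) → A j, IsAggregator X M → IsDictatorial X M)
    (d : Fin (N + 1)) (hprin : ∀ S : Finset (Fin (N + 1)), memU X f S ↔ d ∈ S) :
    IsDictatorial X f := by
  classical
  by_contra hnd
  -- Step 1: f is the projection on d on every realizable column with a repeated row.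
  have hR : ∀ (xs : Fin (N + 1) → ∀ j, A j), (∀ i, xs i ∈ X) →
      ∀ p q : Fin (N + 1), p ≠ q → xs p = xs q →
      ∀ j, f j (fun i => xs i j) = xs d j := by
    intro xs hxs p q hpq hpqeq
    set s : Fin N → Fin (N + 1) := q.succAbove with hs
    have hchoice : ∀ l : Fin (N + 1), l ≠ q → ∃ t, s t = l := fun l hl =>
      Fin.exists_succAbove_eq hl
    set e : Fin (N + 1) → Fin N := fun l =>
      if h : l = q then (hchoice p hpq).choose else (hchoice l h).choose with he
    have hse : ∀ l, l ≠ q → s (e l) = l := by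
      intro l hl
      simp only [he, dif_neg hl]
      exact (hchoice l hl).choose_spec
    have hseq : s (e q) = p := by
      simp only [he, dif_pos rfl]
      exact (hchoice p hpq).choose_spec
    set M : ∀ j, (Fin N → A j) → A j := fun j t => f j (fun l => t (e l)) with hM
    have hMagg : IsAggregator X M := by
      constructor
      · intro j t
        obtain ⟨i, hi⟩ := hf.1 j (fun l => t (e l))
        exact ⟨e i, hi⟩
      · intro ys hys
        exact hf.2 (fun l => ys (e l)) (fun l => hys (e l))
    obtain ⟨δ, hδ⟩ := hIH M hMagg
    have hSU : memU X f (Finset.univ.filter (fun l => e l = δ)) := by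
      intro u hu v hv j
      have hcol : (fun l => if l ∈ Finset.univ.filter (fun l => e l = δ) then u j else v j)
          = (fun l => (fun τ => if τ = δ then u j else v j) (e l)) := by
        funext l
        by_cases h : e l = δ <;> simp [h, Finset.mem_filter]
      rw [hcol]
      have h2 := hδ (fun τ => if τ = δ then u else v)
        (fun τ => by by_cases h : τ = δ <;> simp [h, hu, hv]) j
      simp only [if_pos rfl] at h2
      have hcol2 : (fun τ => (if τ = δ then u else v) j)
          = (fun τ => if τ = δ then u j else v j) := by
        funext τ
        by_cases h : τ = δ <;> simp [h]
      rw [← hcol2]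
      exact h2
    have hed : e d = δ := by
      have := (hprin _).mp hSU
      simpa using this
    intro j
    have h3 := hδ (fun τ => xs (s τ)) (fun τ => hxs _) j
    have hcol3 : (fun l => xs (s (e l)) j) = (fun l => xs l j) := by
      funext l
      by_cases hl : l = q
      · subst hl
        rw [hseq, hpqeq]
      · rw [hse l hl]
    have hval : xs (s δ) = xs d := by
      rw [← hed]
      by_cases hdq : d = q
      · subst hdq
        rw [hseq, hpqeq]
      · rw [hse d hdq]
    calc f j (fun i => xs i j) = M j (fun τ => xs (s τ) j) := by
          show f j _ = f j _
          congr 1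
          exact hcol3.symm
      _ = xs (s δ) j := h3
      _ = xs d j := by rw [hval]
  -- Step 2: extract a witness against dictatorship at d.
  have hW : ∃ xs : Fin (N + 1) → ∀ j, A j, (∀ i, xs i ∈ X) ∧
      ∃ j, f j (fun i => xs i j) ≠ xs d j := by
    by_contra h
    push_neg at h
    exact hnd ⟨d, fun xs hxs j => h xs hxs j⟩
  obtain ⟨xs, hxs, j0, hj0⟩ := hW
  obtain ⟨k, hk⟩ := hf.1 j0 (fun i => xs i j0)
  have hkd : xs k j0 ≠ xs d j0 := fun h => hj0 (hk.trans h)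
  have hkdne : k ≠ d := fun h => hkd (by rw [h])
  -- Step 3: the normalized aggregator f', whose realizable values lie in slots d, k.
  set f' : ∀ j, (Fin (N + 1) → A j) → A j :=
    fun j t => f j (Function.update t k (f j t)) with hf'
  have hf'col : ∀ (ws : Fin (N + 1) → ∀ j, A j) (j : Fin m),
      (fun i => Function.update ws k (fun j' => f j' (fun i' => ws i' j')) i j)
        = Function.update (fun i => ws i j) k (f j (fun i' => ws i' j)) := by
    intro ws j
    funext i
    by_cases h : i = k
    · subst h
      simp [Function.update_self]
    · simp [Function.update_of_ne h]
  have hf'agg : IsAggregator X f' := by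
    constructor
    · intro j t
      obtain ⟨i, hi⟩ := hf.1 j (Function.update t k (f j t))
      by_cases hik : i = k
      · subst hik
        rw [Function.update_self] at hi
        obtain ⟨i', hi'⟩ := hf.1 j t
        exact ⟨i', hi.trans hi'⟩
      · rw [Function.update_of_ne hik] at hi
        exact ⟨i, hi⟩
    · intro ys hys
      have hw : (fun j => f j (fun i => ys i j)) ∈ X := hf.2 ys hys
      have := hf.2 (Function.update ys k (fun j => f j (fun i => ys i j)))
        (fun i => by
          by_cases h : i = k
          · subst h
            rw [Function.update_self]
            exact hw
          · rw [Function.update_of_ne h]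
            exact hys i)
      convert this using 1
      funext j
      show f j _ = f j _
      congr 1
      exact (hf'col ys j).symm
  -- the range property
  have hrange : ∀ (ws : Fin (N + 1) → ∀ j, A j), (∀ i, ws i ∈ X) → ∀ j,
      f' j (fun i => ws i j) = ws d j ∨ f' j (fun i => ws i j) = ws k j := by
    intro ws hws j
    obtain ⟨l, hl⟩ := hf.1 j (fun i => ws i j)
    by_cases hvk : f j (fun i => ws i j) = ws k j
    · right
      show f j _ = ws k j
      rw [show Function.update (fun i => ws i j) k (f j (fun i => ws i j))
          = (fun i => ws i j) by rw [hvk]; exact Function.update_eq_self k _]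
      exact hvk
    · left
      have hlk : l ≠ k := by
        intro h
        exact hvk (by rw [hl, h])
      show f j (Function.update (fun i => ws i j) k (f j (fun i => ws i j))) = ws d j
      have hcol : Function.update (fun i => ws i j) k (f j (fun i => ws i j))
          = (fun i => Function.update ws k (ws l) i j) := by
        funext i
        by_cases h : i = k
        · subst h
          rw [Function.update_self, Function.update_self, hl]
        · rw [Function.update_of_ne h, Function.update_of_ne h]
      rw [hcol]
      have := hR (Function.update ws k (ws l))
        (fun i => by
          by_cases h : i = k
          · subst h; rw [Function.update_self]; exact hws l
          · rw [Function.update_of_ne h]; exact hws i)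
        k l (fun h => hlk h.symm)
        (by rw [Function.update_self, Function.update_of_ne hlk]) j
      rw [this, Function.update_of_ne hkdne.symm]
  -- witness survives normalization
  have hw' : f' j0 (fun i => xs i j0) = xs k j0 := by
    show f j0 (Function.update (fun i => xs i j0) k (f j0 (fun i => xs i j0))) = xs k j0
    rw [show Function.update (fun i => xs i j0) k (f j0 (fun i => xs i j0))
        = (fun i => xs i j0) by rw [hk]; exact Function.update_eq_self k _]
    exact hk
  -- a third index
  have hl0 : ∃ l0 : Fin (N + 1), l0 ≠ d ∧ l0 ≠ k := by
    by_contra h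
    push_neg at h
    have hsub : (Finset.univ : Finset (Fin (N + 1))) ⊆ {d, k} := by
      intro l _
      rcases eq_or_ne l d with h1 | h1
      · simp [h1]
      · simp [h l h1]
    have := Finset.card_le_card hsub
    simp only [Finset.card_univ, Fintype.card_fin] at this
    have h2 : ({d, k} : Finset (Fin (N + 1))).card ≤ 2 := Finset.card_insert_le _ _ |>.trans (by simp)
    omega
  obtain ⟨l0, hl0d, hl0k⟩ := hl0
  -- Step 4: the binary aggregator with fixed rows
  set g : ∀ j, (Fin 2 → A j) → A j := fun j t =>
    if f' j (fun i => if i = d then t 0 else if i = k then t 1 else xs i j) = t 1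
    then t 1 else t 0 with hg
  have hws : ∀ u v : ∀ j, A j, u ∈ X → v ∈ X →
      (∀ i, (fun i => if i = d then u else if i = k then v else xs i) i ∈ X) := by
    intro u v hu hv i
    by_cases h1 : i = d
    · simpa [h1] using hu
    · by_cases h2 : i = k
      · subst h2
        simpa [h1] using hv
      · simpa [h1, h2] using hxs i
  have hgcol : ∀ (u v : ∀ j, A j) (j : Fin m),
      (fun i => if i = d then u j else if i = k then v j else xs i j)
        = (fun i => (fun i' => if i' = d then u else if i' = k then v else xs i') i j) := by
    intro u v j
    funext i
    by_cases h1 : i = d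
    · simp [h1]
    · by_cases h2 : i = k
      · subst h2
        simp [h1]
      · simp [h1, h2]
  have hgval : ∀ u v : ∀ j, A j, u ∈ X → v ∈ X → ∀ j,
      g j ![u j, v j] = f' j (fun i => (fun i' => if i' = d then u else
        if i' = k then v else xs i') i j) := by
    intro u v hu hv j
    show (if f' j (fun i => if i = d then u j else if i = k then v j else xs i j) = v j
      then v j else u j) = _
    rw [hgcol u v j]
    rcases hrange (fun i' => if i' = d then u else if i' = k then v else xs i')
        (hws u v hu hv) j with h | h
    · have h' : f' j (fun i => (fun i' => if i' = d then u else if i' = k then v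
          else xs i') i j) = u j := by
        rw [h]; simp
      rw [h']
      by_cases huv : u j = v j
      · rw [if_pos huv]; exact huv.symm
      · rw [if_neg huv]
    · have h' : f' j (fun i => (fun i' => if i' = d then u else if i' = k then v
          else xs i') i j) = v j := by
        rw [h]; simp [hkdne]
      rw [h', if_pos rfl]
  have hgagg : IsAggregator X g := by
    constructor
    · intro j t
      by_cases h : f' j (fun i => if i = d then t 0 else if i = k then t 1 else xs i j) = t 1
      · refine ⟨1, ?_⟩
        show (if f' j (fun i => if i = d then t 0 else if i = k then t 1 else xs i j) = t 1
          then t 1 else t 0) = t 1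
        rw [if_pos h]
      · refine ⟨0, ?_⟩
        show (if f' j (fun i => if i = d then t 0 else if i = k then t 1 else xs i j) = t 1
          then t 1 else t 0) = t 0
        rw [if_neg h]
    · intro ts hts
      have hmem := hf'agg.2 (fun i' => if i' = d then ts 0 else if i' = k then ts 1 else xs i')
        (hws (ts 0) (ts 1) (hts 0) (hts 1))
      convert hmem using 1
      funext j
      have := hgval (ts 0) (ts 1) (hts 0) (hts 1) j
      have hcc : (fun i2 : Fin 2 => ts i2 j) = ![ts 0 j, ts 1 j] := by
        funext i2
        fin_cases i2 <;> rfl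
      rw [hcc]
      exact this
  obtain ⟨d2, hd2⟩ := hH g hgagg
  fin_cases d2
  · -- dictator 0: contradiction at the witness
    have h := hd2 ![xs d, xs k] (mem2 (hxs d) (hxs k)) j0
    have hcol : (fun i => if i = d then xs d j0 else if i = k then xs k j0 else xs i j0)
        = (fun i => xs i j0) := by
      funext i
      by_cases h1 : i = d
      · simp [h1]
      · by_cases h2 : i = k
        · subst h2
          simp [hkdne]
        · simp [h1, h2]
    have hgw : g j0 ![xs d j0, xs k j0] = xs k j0 := by
      show (if f' j0 (fun i => if i = d then xs d j0 else if i = k then xs k j0 else xs i j0)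
        = xs k j0 then xs k j0 else xs d j0) = xs k j0
      rw [hcol, if_pos hw']
    have hcol2 : (fun i2 => (![xs d, xs k] : Fin 2 → ∀ j, A j) i2 j0) = ![xs d j0, xs k j0] := by
      funext i2
      fin_cases i2 <;> rfl
    rw [hcol2] at h
    rw [hgw] at h
    exact hkd (by simpa using h)
  · -- dictator 1: f' must then copy the fixed row xs l0, contradicting feasibility
    have hval : ∀ u : ∀ j, A j, u ∈ X → ∀ j, g j ![u j, xs l0 j] = u j := by
      intro u hu j
      have hrow := hws u (xs l0) hu (hxs l0)
      set ws' : Fin (N + 1) → ∀ j, A j :=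
        fun i' => if i' = d then u else if i' = k then xs l0 else xs i' with hws'
      have hkl0 : ws' k = ws' l0 := by
        simp [hws', hkdne, hl0d, hl0k]
      have hfval : f j (fun i => ws' i j) = u j := by
        have := hR ws' hrow k l0 (fun h => hl0k h.symm) hkl0 j
        rw [this]
        simp [hws']
      have hf'val : f' j (fun i => ws' i j) = u j := by
        show f j (Function.update (fun i => ws' i j) k (f j (fun i => ws' i j))) = u j
        rw [hfval]
        have hcolu : Function.update (fun i => ws' i j) k (u j)
            = (fun i => Function.update ws' k u i j) := by
          funext i
          by_cases h : i = k
          · subst h; rw [Function.update_self, Function.update_self]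
          · rw [Function.update_of_ne h, Function.update_of_ne h]
        rw [hcolu]
        have := hR (Function.update ws' k u)
          (fun i => by
            by_cases h : i = k
            · subst h; rw [Function.update_self]; exact hu
            · rw [Function.update_of_ne h]; exact hrow i)
          d k hkdne.symm
          (by rw [Function.update_of_ne hkdne.symm, Function.update_self]
              simp [hws']) j
        rw [this, Function.update_of_ne hkdne.symm]
        simp [hws']
      show (if f' j (fun i => if i = d then u j else if i = k then xs l0 j else xs i j)
        = xs l0 j then xs l0 j else u j) = u j
      have hcolw : (fun i => if i = d then u j else if i = k then xs l0 j else xs i j)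
          = (fun i => ws' i j) := by
        funext i
        by_cases h1 : i = d
        · simp [hws', h1]
        · by_cases h2 : i = k
          · subst h2
            simp [hws', h1]
          · simp [hws', h1, h2]
      rw [hcolw, hf'val]
      by_cases huv : u j = xs l0 j
      · rw [if_pos huv]; exact huv.symm
      · rw [if_neg huv]
    obtain ⟨z, hz, z', hz', hne⟩ := hX ⟨0, hm⟩
    have h1 := hd2 ![z, xs l0] (mem2 hz (hxs l0)) ⟨0, hm⟩
    have h2 := hd2 ![z', xs l0] (mem2 hz' (hxs l0)) ⟨0, hm⟩
    have hcolz : (fun i2 => (![z, xs l0] : Fin 2 → ∀ j, A j) i2 ⟨0, hm⟩)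
        = ![z ⟨0, hm⟩, xs l0 ⟨0, hm⟩] := by
      funext i2; fin_cases i2 <;> rfl
    have hcolz' : (fun i2 => (![z', xs l0] : Fin 2 → ∀ j, A j) i2 ⟨0, hm⟩)
        = ![z' ⟨0, hm⟩, xs l0 ⟨0, hm⟩] := by
      funext i2; fin_cases i2 <;> rfl
    rw [hcolz] at h1
    rw [hcolz'] at h2
    rw [hval z hz ⟨0, hm⟩] at h1
    rw [hval z' hz' ⟨0, hm⟩] at h2
    simp only at h1 h2
    exact hne (h1.trans h2.symm)

end Helpers5

/-- `X` is a possibility domain iff `X` admits a binary non-dictatorial aggregator,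
or a majority aggregator, or a minority aggregator. -/
theorem statement_18 {m : ℕ} (hm : 1 ≤ m) {A : Fin m → Type*} [∀ j, Fintype (A j)]
    (hA : ∀ j, 2 ≤ Fintype.card (A j))
    (X : Set (∀ j, A j)) (hX : Feasible X) :
    IsPossibilityDomain X ↔
      ((∃ f : ∀ j, (Fin 2 → A j) → A j, IsAggregator X f ∧ ¬ IsDictatorial X f) ∨
       (∃ f : ∀ j, (Fin 3 → A j) → A j, IsAggregator X f ∧ ∀ j, IsMajorityOp (f j)) ∨
       (∃ f : ∀ j, (Fin 3 → A j) → A j, IsAggregator X f ∧ ∀ j, IsMinorityOp (f j))) := by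
  classical
  constructor
  · rintro ⟨n, hn, f, hfagg, hfnd⟩
    by_contra hRHS
    push_neg at hRHS
    obtain ⟨h1, h2, h3⟩ := hRHS
    have hbin : ∀ g : ∀ j, (Fin 2 → A j) → A j, IsAggregator X g → IsDictatorial X g := h1
    have key : ∀ n', 2 ≤ n' → ∀ f' : ∀ j, (Fin n' → A j) → A j,
        IsAggregator X f' → IsDictatorial X f' := by
      intro n'
      induction n' using Nat.strong_induction_on with
      | _ n' IH =>
        intro hn' f' hagg'
        rcases eq_or_lt_of_le hn' with heq | hlt
        · subst heq
          exact hbin f' hagg'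
        · obtain ⟨N, rfl⟩ : ∃ N, n' = N + 1 := ⟨n' - 1, by omega⟩
          have hN : 2 ≤ N := by omega
          by_cases hC2 : ∃ S T : Finset (Fin (N + 1)),
              Disjoint S T ∧ memU X f' S ∧ memU X f' T
          · exfalso
            obtain ⟨S, T, hdisj, hS, hT⟩ := hC2
            by_cases hRmem : memU X f' ((S ∪ T)ᶜ)
            · obtain ⟨F, hF, hFmin⟩ := exists_min_of_pattern (tern f' S T)
                (tern_agg hagg' S T)
                (tern_e1' (f := f') hRmem)
                (tern_e2' (f := f') hdisj hT)
                (tern_e3' (f := f') (S2 := T) hS)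
              obtain ⟨j, hj⟩ := h3 F hF
              exact hj (hFmin j)
            · have hU : memU X f' (S ∪ T) :=
                (memU_dich hagg' hbin (S ∪ T)).resolve_right hRmem
              obtain ⟨F, hF, hFmaj⟩ := exists_maj_of_hpattern (tern f' S T)
                (tern_agg hagg' S T)
                (tern_e1 (f := f') hU)
                (tern_e2' (f := f') hdisj hT)
                (tern_e3' (f := f') (S2 := T) hS)
              obtain ⟨j, hj⟩ := h2 F hF
              exact hj (hFmaj j)
          · by_cases hC1 : ∃ S T : Finset (Fin (N + 1)), Disjoint S T ∧
                ¬ memU X f' S ∧ ¬ memU X f' T ∧ ¬ memU X f' ((S ∪ T)ᶜ)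
            · exfalso
              obtain ⟨S, T, hdisj, hS, hT, hRm⟩ := hC1
              have hU : memU X f' (S ∪ T) :=
                (memU_dich hagg' hbin (S ∪ T)).resolve_right hRm
              have hTc : memU X f' Tᶜ := (memU_dich hagg' hbin T).resolve_left hT
              have hSc : memU X f' Sᶜ := (memU_dich hagg' hbin S).resolve_left hS
              obtain ⟨F, hF, hFmaj⟩ := exists_maj_of_pattern (tern f' S T)
                (tern_agg hagg' S T)
                (tern_e1 (f := f') hU)
                (tern_e2 (f := f') hdisj hTc)
                (tern_e3 (f := f') (S2 := T) hSc)
              obtain ⟨j, hj⟩ := h2 F hF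
              exact hj (hFmaj j)
            · have hC2' : ∀ S T : Finset (Fin (N + 1)), Disjoint S T →
                  memU X f' S → memU X f' T → False := by
                intro S T hd hS hT
                exact hC2 ⟨S, T, hd, hS, hT⟩
              have hC1' : ∀ S T : Finset (Fin (N + 1)), Disjoint S T →
                  ¬ memU X f' S → ¬ memU X f' T → memU X f' ((S ∪ T)ᶜ) := by
                intro S T hd hS hT
                by_contra h
                exact hC1 ⟨S, T, hd, hS, hT, h⟩
              obtain ⟨d, hprin⟩ := principal hm hX hagg' hbin hC2' hC1'
              exact endgame hm hX hN f' hagg' hbin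
                (fun M hM => IH N (by omega) (by omega) M hM) d hprin
    exact hfnd (key n hn f hfagg)
  · rintro (⟨f, hf, hnd⟩ | ⟨f, hf, hmaj⟩ | ⟨f, hf, hmin⟩)
    · exact ⟨2, le_refl 2, f, hf, hnd⟩
    · refine ⟨3, by omega, f, hf, ?_⟩
      rintro ⟨d, hd⟩
      obtain ⟨z, hz, z', hz', hne⟩ := hX ⟨0, hm⟩
      fin_cases d
      · have h := hd ![z', z, z] (mem3 hz' hz hz) ⟨0, hm⟩
        rw [colfin3] at h
        simp only [Matrix.cons_val_zero, Matrix.cons_val_one, Matrix.head_cons,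
          Matrix.cons_val_two, Matrix.tail_cons] at h
        rw [(hmaj ⟨0, hm⟩ (z ⟨0, hm⟩) (z' ⟨0, hm⟩)).2.2] at h
        exact hne h
      · have h := hd ![z, z', z] (mem3 hz hz' hz) ⟨0, hm⟩
        rw [colfin3] at h
        simp only [Matrix.cons_val_zero, Matrix.cons_val_one, Matrix.head_cons,
          Matrix.cons_val_two, Matrix.tail_cons] at h
        rw [(hmaj ⟨0, hm⟩ (z ⟨0, hm⟩) (z' ⟨0, hm⟩)).2.1] at h
        exact hne h
      · have h := hd ![z, z, z'] (mem3 hz hz hz') ⟨0, hm⟩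
        rw [colfin3] at h
        simp only [Matrix.cons_val_zero, Matrix.cons_val_one, Matrix.head_cons,
          Matrix.cons_val_two, Matrix.tail_cons] at h
        rw [(hmaj ⟨0, hm⟩ (z ⟨0, hm⟩) (z' ⟨0, hm⟩)).1] at h
        exact hne h
    · refine ⟨3, by omega, f, hf, ?_⟩
      rintro ⟨d, hd⟩
      obtain ⟨z, hz, z', hz', hne⟩ := hX ⟨0, hm⟩
      fin_cases d
      · have h := hd ![z, z, z'] (mem3 hz hz hz') ⟨0, hm⟩
        rw [colfin3] at h
        simp only [Matrix.cons_val_zero, Matrix.cons_val_one, Matrix.head_cons,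
          Matrix.cons_val_two, Matrix.tail_cons] at h
        rw [(hmin ⟨0, hm⟩ (z ⟨0, hm⟩) (z' ⟨0, hm⟩)).1] at h
        exact hne h.symm
      · have h := hd ![z, z, z'] (mem3 hz hz hz') ⟨0, hm⟩
        rw [colfin3] at h
        simp only [Matrix.cons_val_zero, Matrix.cons_val_one, Matrix.head_cons,
          Matrix.cons_val_two, Matrix.tail_cons] at h
        rw [(hmin ⟨0, hm⟩ (z ⟨0, hm⟩) (z' ⟨0, hm⟩)).1] at h
        exact hne h.symm
      · have h := hd ![z, z', z'] (mem3 hz hz' hz') ⟨0, hm⟩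
        rw [colfin3] at h
        simp only [Matrix.cons_val_zero, Matrix.cons_val_one, Matrix.head_cons,
          Matrix.cons_val_two, Matrix.tail_cons] at h
        rw [(hmin ⟨0, hm⟩ (z' ⟨0, hm⟩) (z ⟨0, hm⟩)).2.2] at h
        exact hne h
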